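/- Let K be a field and let η : K[x_0, x_1, x_2] → K[t] be the K-algebra homomorphism defined by η(x_0) = t^7, η(x_1) = t^8, η(x_2) = t^6. Then the kernel of η equals the ideal of K[x_0, x_1, x_2] generated by the two binomials x_1·x_2 − x_0^2 and x_2^4 − x_1^3. -/

import Mathlib

open MvPolynomial Polynomial

namespace Stmt15

variable {K : Type*} [Field K]

noncomputable def ee (K : Type*) [Field K] : MvPolynomial (Fin 3) K →ₐ[K] Polynomial K :=
  aeval ![Polynomial.X ^ 7, Polynomial.X ^ 8, Polynomial.X ^ 6]

noncomputable def II (K : Type*) [Field K] : Ideal (MvPolynomial (Fin 3) K) :=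
  Ideal.span {X 1 * X 2 - X 0 ^ 2, X 2 ^ 4 - X 1 ^ 3}

lemma g1_mem : (X 1 * X 2 - X 0 ^ 2 : MvPolynomial (Fin 3) K) ∈ II K :=
  Ideal.subset_span (by simp)

lemma g2_mem : (X 2 ^ 4 - X 1 ^ 3 : MvPolynomial (Fin 3) K) ∈ II K :=
  Ideal.subset_span (by simp)

lemma mono_eq (m : Fin 3 →₀ ℕ) :
    monomial m (1 : K) = X 0 ^ m 0 * X 1 ^ m 1 * X 2 ^ m 2 := by
  rw [monomial_eq, MvPolynomial.C_1, one_mul,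
    Finsupp.prod_fintype _ _ (fun i => pow_zero _), Fin.prod_univ_three]

lemma ee_XXX (a b c : ℕ) :
    ee K (X 0 ^ a * X 1 ^ b * X 2 ^ c) = Polynomial.X ^ (7 * a + 8 * b + 6 * c) := by
  simp only [ee, map_mul, map_pow, MvPolynomial.aeval_X, Matrix.cons_val_zero, Matrix.cons_val_one,
    Matrix.head_cons]
  have h2 : (![Polynomial.X ^ 7, Polynomial.X ^ 8, Polynomial.X ^ 6] : Fin 3 → Polynomial K) 2
      = Polynomial.X ^ 6 := rfl
  rw [h2, ← pow_mul, ← pow_mul, ← pow_mul, ← pow_add, ← pow_add]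

lemma ee_mono (m : Fin 3 →₀ ℕ) :
    ee K (monomial m 1) = Polynomial.X ^ (7 * m 0 + 8 * m 1 + 6 * m 2) := by
  rw [mono_eq, ee_XXX]

lemma reduceN : ∀ n a b c : ℕ, a + c ≤ n → ∃ a' b' c' : ℕ, a' ≤ 1 ∧ c' ≤ 3 ∧
    7*a'+8*b'+6*c' = 7*a+8*b+6*c ∧
    (X 0 ^ a * X 1 ^ b * X 2 ^ c - X 0 ^ a' * X 1 ^ b' * X 2 ^ c'
      : MvPolynomial (Fin 3) K) ∈ II K := by
  intro n
  induction n with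
  | zero =>
    intro a b c h
    exact ⟨a, b, c, by omega, by omega, rfl, by simp [Ideal.zero_mem]⟩
  | succ n ih =>
    intro a b c h
    by_cases ha : 2 ≤ a
    · obtain ⟨a'', rfl⟩ : ∃ a'', a = a'' + 2 := ⟨a - 2, by omega⟩
      obtain ⟨a', b', c', h1, h2, h3, h4⟩ := ih a'' (b+1) (c+1) (by omega)
      refine ⟨a', b', c', h1, h2, by omega, ?_⟩
      have step : (X 0 ^ (a''+2) * X 1 ^ b * X 2 ^ c
          - X 0 ^ a'' * X 1 ^ (b+1) * X 2 ^ (c+1) : MvPolynomial (Fin 3) K)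
          = (-(X 0 ^ a'' * X 1 ^ b * X 2 ^ c)) * (X 1 * X 2 - X 0 ^ 2) := by ring
      have hs : (X 0 ^ (a''+2) * X 1 ^ b * X 2 ^ c
          - X 0 ^ a'' * X 1 ^ (b+1) * X 2 ^ (c+1) : MvPolynomial (Fin 3) K) ∈ II K := by
        rw [step]; exact Ideal.mul_mem_left _ _ g1_mem
      have := Ideal.add_mem _ hs h4
      rwa [sub_add_sub_cancel] at this
    · by_cases hc : 4 ≤ c
      · obtain ⟨c'', rfl⟩ : ∃ c'', c = c'' + 4 := ⟨c - 4, by omega⟩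
        obtain ⟨a', b', c', h1, h2, h3, h4⟩ := ih a (b+3) c'' (by omega)
        refine ⟨a', b', c', h1, h2, by omega, ?_⟩
        have step : (X 0 ^ a * X 1 ^ b * X 2 ^ (c''+4)
            - X 0 ^ a * X 1 ^ (b+3) * X 2 ^ c'' : MvPolynomial (Fin 3) K)
            = (X 0 ^ a * X 1 ^ b * X 2 ^ c'') * (X 2 ^ 4 - X 1 ^ 3) := by ring
        have hs : (X 0 ^ a * X 1 ^ b * X 2 ^ (c''+4)
            - X 0 ^ a * X 1 ^ (b+3) * X 2 ^ c'' : MvPolynomial (Fin 3) K) ∈ II K := by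
          rw [step]; exact Ideal.mul_mem_left _ _ g2_mem
        have := Ideal.add_mem _ hs h4
        rwa [sub_add_sub_cancel] at this
      · exact ⟨a, b, c, by omega, by omega, rfl, by simp [Ideal.zero_mem]⟩

lemma reduceF (m : Fin 3 →₀ ℕ) : ∃ m' : Fin 3 →₀ ℕ, m' 0 ≤ 1 ∧ m' 2 ≤ 3 ∧
    7 * m' 0 + 8 * m' 1 + 6 * m' 2 = 7 * m 0 + 8 * m 1 + 6 * m 2 ∧
    (monomial m 1 - monomial m' 1 : MvPolynomial (Fin 3) K) ∈ II K := by
  obtain ⟨a', b', c', h1, h2, h3, h4⟩ := reduceN (K := K) (m 0 + m 2) (m 0) (m 1) (m 2) le_rfl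
  have e0 : ((Finsupp.single 0 a' + Finsupp.single 1 b' + Finsupp.single 2 c' : Fin 3 →₀ ℕ)) 0 = a' := by
    simp [Finsupp.single_apply]
  have e1 : ((Finsupp.single 0 a' + Finsupp.single 1 b' + Finsupp.single 2 c' : Fin 3 →₀ ℕ)) 1 = b' := by
    simp [Finsupp.single_apply]
  have e2 : ((Finsupp.single 0 a' + Finsupp.single 1 b' + Finsupp.single 2 c' : Fin 3 →₀ ℕ)) 2 = c' := by
    simp [Finsupp.single_apply]
  refine ⟨Finsupp.single 0 a' + Finsupp.single 1 b' + Finsupp.single 2 c', ?_, ?_, ?_, ?_⟩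
  · rw [e0]; exact h1
  · rw [e2]; exact h2
  · rw [e0, e1, e2]; exact h3
  · rw [mono_eq, mono_eq, e0, e1, e2]
    exact h4

lemma w_inj {m d : Fin 3 →₀ ℕ} (hm : m 0 ≤ 1 ∧ m 2 ≤ 3) (hd : d 0 ≤ 1 ∧ d 2 ≤ 3)
    (h : 7 * m 0 + 8 * m 1 + 6 * m 2 = 7 * d 0 + 8 * d 1 + 6 * d 2) : m = d := by
  have h0 : m 0 = d 0 ∧ m 1 = d 1 ∧ m 2 = d 2 := by omega
  ext i
  fin_cases i
  · exact h0.1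
  · exact h0.2.1
  · exact h0.2.2

lemma normal_ker (g : MvPolynomial (Fin 3) K)
    (hn : ∀ m ∈ g.support, m 0 ≤ 1 ∧ m 2 ≤ 3) (h0 : ee K g = 0) : g = 0 := by
  rw [MvPolynomial.eq_zero_iff]
  intro d
  by_cases hd : d ∈ g.support
  · have hgs : g = ∑ m ∈ g.support, coeff m g • monomial m 1 := by
      conv_lhs => rw [g.as_sum]
      refine Finset.sum_congr rfl fun m _ => ?_
      rw [MvPolynomial.smul_monomial, smul_eq_mul, mul_one]
    have hcoeff := congrArg (fun p => Polynomial.coeff p (7 * d 0 + 8 * d 1 + 6 * d 2)) h0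
    rw [hgs] at hcoeff
    rw [map_sum] at hcoeff
    simp only [map_smul, ee_mono] at hcoeff
    rw [Polynomial.finset_sum_coeff] at hcoeff
    simp only [Polynomial.coeff_smul, Polynomial.coeff_X_pow, smul_eq_mul] at hcoeff
    rw [Finset.sum_eq_single d (fun m hm hne => by
        rw [if_neg, mul_zero]
        exact fun hw => hne (w_inj (hn m hm) (hn d hd) hw.symm))
      (fun h => absurd hd h)] at hcoeff
    rw [if_pos rfl, mul_one] at hcoeff
    rwa [Polynomial.coeff_zero] at hcoeff
  · exact notMem_support_iff.mp hd

lemma II_le_ker : II K ≤ RingHom.ker (ee K) := by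
  rw [II, Ideal.span_le]
  rintro p hp
  simp only [Set.mem_insert_iff, Set.mem_singleton_iff] at hp
  rcases hp with rfl | rfl <;>
  · simp only [SetLike.mem_coe, RingHom.mem_ker, AlgHom.coe_ringHom_mk, map_sub, map_mul, map_pow]
    simp [ee]
    ring

theorem main : RingHom.ker (ee K) = II K := by
  apply le_antisymm
  · intro f hf
    rw [RingHom.mem_ker] at hf
    choose nf h1 h2 h3 h4 using reduceF (K := K)
    set g : MvPolynomial (Fin 3) K := ∑ m ∈ f.support, coeff m f • monomial (nf m) 1 with hg
    have hf2 : f = ∑ m ∈ f.support, coeff m f • monomial m (1:K) := by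
      conv_lhs => rw [f.as_sum]
      refine Finset.sum_congr rfl fun m _ => ?_
      rw [MvPolynomial.smul_monomial, smul_eq_mul, mul_one]
    have hfg : f - g ∈ II K := by
      rw [hf2, hg, ← Finset.sum_sub_distrib]
      refine Submodule.sum_mem _ fun m _ => ?_
      rw [← smul_sub, MvPolynomial.smul_eq_C_mul]
      exact Ideal.mul_mem_left _ _ (h4 m)
    have hgker : ee K g = 0 := by
      have h5 : ee K (f - g) = 0 := II_le_ker hfg
      rw [map_sub, hf, zero_sub, neg_eq_zero] at h5
      exact h5
    have hnorm : ∀ m ∈ g.support, m 0 ≤ 1 ∧ m 2 ≤ 3 := by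
      intro m hm
      rw [hg] at hm
      have := MvPolynomial.support_sum hm
      rw [Finset.mem_biUnion] at this
      obtain ⟨i, _, hi⟩ := this
      have hsub : (coeff i f • monomial (nf i) (1:K)).support ⊆ {nf i} := by
        rw [MvPolynomial.smul_monomial, smul_eq_mul, mul_one]
        exact support_monomial_subset
      have := hsub hi
      rw [Finset.mem_singleton] at this
      subst this
      exact ⟨h1 i, h2 i⟩
    have hg0 : g = 0 := normal_ker g hnorm hgker
    rw [hg0, sub_zero] at hfg
    exact hfg
  · exact II_le_ker

end Stmt15

/-- The kernel of `η : K[x_0,x_1,x_2] → K[t]`, `x_0 ↦ t^7`, `x_1 ↦ t^8`, `x_2 ↦ t^6`,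
is generated by `x_1x_2 − x_0^2` and `x_2^4 − x_1^3`. -/
theorem stmt15 {K : Type*} [Field K]
    (η : MvPolynomial (Fin 3) K →ₐ[K] Polynomial K)
    (hη : η = MvPolynomial.aeval ![Polynomial.X ^ 7, Polynomial.X ^ 8, Polynomial.X ^ 6]) :
    RingHom.ker η = Ideal.span
      {MvPolynomial.X 1 * MvPolynomial.X 2 - MvPolynomial.X 0 ^ 2,
       MvPolynomial.X 2 ^ 4 - MvPolynomial.X 1 ^ 3} := by
  subst hη
  exact Stmt15.main
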